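/- Let a < l and b > 0 be real numbers, let f : ℝ → ℝ satisfy |f(t)| ≤ 1 for all t ≥ 0, and let y : ℝ → ℝ be differentiable with y′(t) = (a − l)·y(t) + b·f(t) for all t ≥ 0. Then limsup_{t→∞} |y(t)| ≤ b/(l − a), and for all 0 ≤ t₀ ≤ t, if |y(t₀)| ≤ b/(l − a) then |y(t)| ≤ b/(l − a). -/

import Mathlib

open Filter

/-- Key Grönwall-type estimate: `e^{μt}|y t| ≤ e^{μt₀}|y t₀| + (b/μ)(e^{μt} - e^{μt₀})`. -/
lemma scalar_key (a l b : ℝ) (hal : a < l) (hb : 0 < b)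
    (f : ℝ → ℝ) (hf : ∀ t : ℝ, 0 ≤ t → |f t| ≤ 1)
    (y : ℝ → ℝ) (hy : ∀ t : ℝ, 0 ≤ t → HasDerivAt y ((a - l) * y t + b * f t) t)
    (t₀ t : ℝ) (h0 : 0 ≤ t₀) (ht : t₀ ≤ t) :
    Real.exp ((l - a) * t) * |y t| ≤
      Real.exp ((l - a) * t₀) * |y t₀|
        + (b / (l - a)) * (Real.exp ((l - a) * t) - Real.exp ((l - a) * t₀)) := by
  set μ := l - a with hμdef
  have hμ : 0 < μ := by simp [hμdef]; linarith
  set g : ℝ → ℝ := fun s => Real.exp (μ * s) * y s with hg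
  have hgd : ∀ s : ℝ, 0 ≤ s → HasDerivAt g (Real.exp (μ * s) * (b * f s)) s := by
    intro s hs
    have hexp : HasDerivAt (fun u : ℝ => Real.exp (μ * u)) (Real.exp (μ * s) * μ) s := by
      have h1 : HasDerivAt (fun u : ℝ => μ * u) μ s := by
        simpa using (hasDerivAt_id s).const_mul μ
      exact h1.exp
    have := hexp.mul (hy s hs)
    refine this.congr_deriv ?_
    rw [hμdef]; ring
  set B : ℝ → ℝ := fun s =>
      Real.exp (μ * t₀) * |y t₀| + (b / μ) * (Real.exp (μ * s) - Real.exp (μ * t₀)) with hB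
  have hBd : ∀ s : ℝ, HasDerivAt B (b * Real.exp (μ * s)) s := by
    intro s
    have hexp : HasDerivAt (fun u : ℝ => Real.exp (μ * u)) (Real.exp (μ * s) * μ) s := by
      have h1 : HasDerivAt (fun u : ℝ => μ * u) μ s := by
        simpa using (hasDerivAt_id s).const_mul μ
      exact h1.exp
    have := ((hexp.sub_const (Real.exp (μ * t₀))).const_mul (b / μ)).const_add
      (Real.exp (μ * t₀) * |y t₀|)
    refine this.congr_deriv ?_
    field_simp
  have key : ∀ ⦃x⦄, x ∈ Set.Icc t₀ t → ‖g x‖ ≤ B x := by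
    refine image_norm_le_of_norm_deriv_right_le_deriv_boundary
      (f' := fun s => Real.exp (μ * s) * (b * f s)) (B' := fun s => b * Real.exp (μ * s))
      ?_ ?_ ?_ ?_ ?_
    · intro x hx
      exact ((hgd x (le_trans h0 hx.1)).continuousAt).continuousWithinAt
    · intro x hx
      exact (hgd x (le_trans h0 hx.1)).hasDerivWithinAt
    · simp [hg, hB, Real.norm_eq_abs, abs_mul, abs_of_pos (Real.exp_pos _)]
    · exact hBd
    · intro x hx
      have hx0 : 0 ≤ x := le_trans h0 hx.1
      have h1 : |f x| ≤ 1 := hf x hx0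
      have h2 : ‖Real.exp (μ * x) * (b * f x)‖ = Real.exp (μ * x) * (b * |f x|) := by
        rw [Real.norm_eq_abs, abs_mul, abs_mul, abs_of_pos (Real.exp_pos _), abs_of_pos hb]
      rw [h2]
      show Real.exp (μ * x) * (b * |f x|) ≤ b * Real.exp (μ * x)
      nlinarith [Real.exp_pos (μ * x),
        mul_le_mul_of_nonneg_left h1 (mul_nonneg hb.le (Real.exp_pos (μ * x)).le)]
  have := key (Set.right_mem_Icc.mpr ht)
  simp only [hg, hB, Real.norm_eq_abs, abs_mul, abs_of_pos (Real.exp_pos _)] at this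
  linarith

/-- Motivating example: the interval [−b/(l−a), b/(l−a)] is attracting and invariant
for the scalar error dynamics y′ = (a−l)y + bf with |f| ≤ 1. -/
theorem scalar_attracting_interval (a l b : ℝ) (hal : a < l) (hb : 0 < b)
    (f : ℝ → ℝ) (hf : ∀ t : ℝ, 0 ≤ t → |f t| ≤ 1)
    (y : ℝ → ℝ) (hy : ∀ t : ℝ, 0 ≤ t → HasDerivAt y ((a - l) * y t + b * f t) t) :
    limsup (fun t => |y t|) atTop ≤ b / (l - a) ∧
      ∀ t₀ t : ℝ, 0 ≤ t₀ → t₀ ≤ t → |y t₀| ≤ b / (l - a) → |y t| ≤ b / (l - a) := by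
  have hμ : 0 < l - a := by linarith
  constructor
  · -- limsup part
    have hbound : ∀ᶠ t in atTop, |y t| ≤ Real.exp (-((l - a) * t)) * |y 0| + b / (l - a) := by
      filter_upwards [eventually_ge_atTop (0 : ℝ)] with t ht
      have hk := scalar_key a l b hal hb f hf y hy 0 t le_rfl ht
      have h1 : Real.exp ((l - a) * 0) = 1 := by simp
      rw [h1, one_mul] at hk
      have hEp := Real.exp_pos ((l - a) * t)
      have hr : 0 < b / (l - a) := div_pos hb hμ
      rw [← mul_le_mul_iff_right₀ hEp]
      have heq : Real.exp ((l - a) * t) * (Real.exp (-((l - a) * t)) * |y 0| + b / (l - a))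
          = |y 0| + b / (l - a) * Real.exp ((l - a) * t) := by
        have he : Real.exp ((l - a) * t) * Real.exp (-((l - a) * t)) = 1 := by
          rw [← Real.exp_add]; simp
        rw [mul_add, ← mul_assoc, he, one_mul]; ring
      rw [heq]
      linarith
    have htend : Tendsto (fun t : ℝ => Real.exp (-((l - a) * t)) * |y 0| + b / (l - a))
        atTop (nhds (0 * |y 0| + b / (l - a))) := by
      apply Tendsto.add_const
      apply Tendsto.mul_const
      apply Real.tendsto_exp_atBot.comp
      exact tendsto_neg_atTop_atBot.comp (tendsto_id.const_mul_atTop hμ)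
    have hls := htend.limsup_eq
    calc limsup (fun t => |y t|) atTop
        ≤ limsup (fun t : ℝ => Real.exp (-((l - a) * t)) * |y 0| + b / (l - a)) atTop :=
          limsup_le_limsup hbound
            (isCoboundedUnder_le_of_eventually_le atTop
              (Eventually.of_forall fun t => abs_nonneg (y t)))
            htend.isBoundedUnder_le
      _ = 0 * |y 0| + b / (l - a) := hls
      _ = b / (l - a) := by ring
  · -- invariance part
    intro t₀ t h0 ht hinit
    have hk := scalar_key a l b hal hb f hf y hy t₀ t h0 ht
    have hEp := Real.exp_pos ((l - a) * t)
    have hEp' := Real.exp_pos ((l - a) * t₀)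
    have h2 := mul_le_mul_of_nonneg_left hinit hEp'.le
    have h3 : Real.exp ((l - a) * t) * |y t| ≤ Real.exp ((l - a) * t) * (b / (l - a)) := by
      linarith
    exact le_of_mul_le_mul_left h3 hEp
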